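/- arXiv:math/9912155 — 5 statements merged into one kernel-verified Lean document; each statement's English description precedes it below -/
import Mathlib

section
/- Let n ≥ 1 and let Λ = ℤ[1/n]. For any integer l with 1 ≤ l < n, the element 1 − t^l is a unit in the quotient ring Λ[t]/(Φ_n(t)), where Φ_n is the n-th cyclotomic polynomial. -/
open Polynomial Finset

lemma key_int_dvd (n : ℕ) (hn : 0 < n) :
    cyclotomic n ℤ ∣ (∏ k ∈ range (n - 1), (1 - X ^ (k + 1)) - (n : ℤ[X])) := by
  rw [← Polynomial.map_dvd_map (Int.castRingHom ℚ) Int.cast_injective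
      (cyclotomic.monic n ℤ)]
  have hζ : IsPrimitiveRoot (Complex.exp (2 * Real.pi * Complex.I / n)) n :=
    Complex.isPrimitiveRoot_exp n hn.ne'
  rw [Polynomial.map_cyclotomic, cyclotomic_eq_minpoly_rat hζ hn]
  apply minpoly.dvd
  have hprod : ∏ k ∈ range (n - 1),
      (1 - Complex.exp (2 * Real.pi * Complex.I / n) ^ (k + 1)) = (n : ℂ) := by
    obtain ⟨m, rfl⟩ : ∃ m, n = m + 1 := ⟨n - 1, (Nat.succ_pred_eq_of_pos hn).symm⟩
    rw [Nat.add_sub_cancel]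
    exact_mod_cast hζ.prod_one_sub_pow_eq_order
  simp only [Polynomial.map_sub, Polynomial.map_prod, Polynomial.map_one, Polynomial.map_pow,
    Polynomial.map_X, Polynomial.map_natCast, map_sub, map_natCast, map_prod, map_pow,
    map_one, map_sub, aeval_X]
  rw [sub_eq_zero]
  exact hprod

lemma key_unit {R : Type*} [CommRing R] (n : ℕ) (hn : 0 < n)
    (hnunit : IsUnit ((n : R))) (l : ℕ) (hl1 : 1 ≤ l) (hln : l < n) :
    IsUnit (1 - (Ideal.Quotient.mk (Ideal.span {cyclotomic n R}) X) ^ l) := by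
  set φ := Ideal.Quotient.mk (Ideal.span {cyclotomic n R}) with hφ
  have hdvd : cyclotomic n R ∣
      (∏ k ∈ range (n - 1), (1 - X ^ (k + 1)) - (n : R[X])) := by
    have := Polynomial.map_dvd (Int.castRingHom R) (key_int_dvd n hn)
    simpa [Polynomial.map_cyclotomic, Polynomial.map_sub, Polynomial.map_prod,
      Polynomial.map_one, Polynomial.map_pow, Polynomial.map_X] using this
  have hprod : φ (∏ k ∈ range (n - 1), (1 - X ^ (k + 1))) = φ ((n : R[X])) := by
    rw [← sub_eq_zero, ← map_sub, Ideal.Quotient.eq_zero_iff_mem]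
    exact Ideal.mem_span_singleton.mpr hdvd
  have hu : IsUnit (φ ((n : R[X]))) := by
    have : ((n : R[X])) = C ((n : R)) := rfl
    rw [this]
    exact hnunit.map (RingHom.comp φ Polynomial.C)
  rw [← hprod] at hu
  refine isUnit_of_dvd_unit ?_ hu
  have hmem : l - 1 ∈ range (n - 1) := by simp only [mem_range]; omega
  have h2 := Finset.dvd_prod_of_mem (fun k => φ (1 - X ^ (k + 1))) hmem
  have hl : l - 1 + 1 = l := by omega
  rw [map_prod]
  simpa [hl, map_sub, map_pow] using h2

/-- In `ℤ[1/n][t]/(Φ_n(t))`, the element `1 - t^l` is a unit for `1 ≤ l < n`. -/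
theorem stmt1 (n : ℕ) (hn : 0 < n) (l : ℕ) (hl1 : 1 ≤ l) (hln : l < n) :
    IsUnit (1 - (Ideal.Quotient.mk
        (Ideal.span {@Polynomial.cyclotomic n (Localization.Away (n : ℤ)) CommRing.toRing})
        Polynomial.X) ^ l) := by
  refine key_unit n hn ?_ l hl1 hln
  have := IsLocalization.Away.algebraMap_isUnit (S := Localization.Away (n : ℤ)) ((n : ℤ))
  simpa using this
end

section
/- Let n ≥ 1 and Λ a commutative ring in which n is invertible. Then the canonical map Λ[t]/(t^n − 1) → ∏_{d | n} Λ[t]/(Φ_d(t)) induced by the factorization t^n − 1 = ∏_{d|n} Φ_d(t) is a ring isomorphism. -/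
set_option synthInstance.maxHeartbeats 1000000
set_option maxHeartbeats 1000000


/-- If `n` is invertible in `Λ`, the canonical map
`Λ[t]/(t^n − 1) → ∏_{d ∣ n} Λ[t]/(Φ_d(t))` is a ring isomorphism. -/
theorem stmt2 (Λ : Type*) [CommRing Λ] (n : ℕ) (hn : 0 < n) (h : IsUnit (n : Λ)) :
    Function.Bijective
      (Pi.ringHom (fun d : n.divisors =>
        Ideal.Quotient.factor (S := Ideal.span {Polynomial.X ^ n - 1})
          (T := Ideal.span {Polynomial.cyclotomic (d : ℕ) Λ})
          (Ideal.span_singleton_le_span_singleton.mpr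
            ((Polynomial.prod_cyclotomic_eq_X_pow_sub_one hn Λ) ▸
              Finset.dvd_prod_of_mem (fun i => Polynomial.cyclotomic i Λ) d.2)))) := by
  classical
  have hsep : (Polynomial.X ^ n - 1 : Polynomial Λ).Separable := by
    have := Polynomial.separable_X_pow_sub_C_unit (1 : Λˣ) h
    simpa using this
  have hcop : ∀ d e : n.divisors, d ≠ e →
      IsCoprime (Polynomial.cyclotomic (d : ℕ) Λ) (Polynomial.cyclotomic (e : ℕ) Λ) := by
    intro d e hde
    have hdvd : Polynomial.cyclotomic (d : ℕ) Λ * Polynomial.cyclotomic (e : ℕ) Λ ∣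
        Polynomial.X ^ n - 1 := by
      rw [← Polynomial.prod_cyclotomic_eq_X_pow_sub_one hn Λ]
      have hne : (d : ℕ) ≠ (e : ℕ) := fun hh => hde (Subtype.ext hh)
      have := Finset.prod_dvd_prod_of_subset ({(d : ℕ), (e : ℕ)} : Finset ℕ) n.divisors
        (fun i => Polynomial.cyclotomic i Λ) (by
          intro i hi
          rcases Finset.mem_insert.mp hi with rfl | hi
          · exact d.2
          · rw [Finset.mem_singleton.mp hi]; exact e.2)
      rwa [Finset.prod_pair hne] at this
    exact (hsep.of_dvd hdvd).isCoprime
  have hpair : Pairwise (Function.onFun IsCoprime fun d : n.divisors =>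
      Ideal.span {Polynomial.cyclotomic (d : ℕ) Λ}) := by
    intro d e hde
    exact (Ideal.isCoprime_span_singleton_iff _ _).mpr (hcop d e hde)
  have hinf : (⨅ d : n.divisors, Ideal.span {Polynomial.cyclotomic (d : ℕ) Λ}) =
      Ideal.span ({Polynomial.X ^ n - 1} : Set (Polynomial Λ)) := by
    rw [Ideal.iInf_span_singleton (fun i j hij => hcop i j hij)]
    congr 1
    rw [← Polynomial.prod_cyclotomic_eq_X_pow_sub_one hn Λ]
    rw [← Finset.prod_coe_sort n.divisors (fun i => Polynomial.cyclotomic i Λ)]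
  constructor
  · rw [injective_iff_map_eq_zero]
    intro a ha
    obtain ⟨x, rfl⟩ := Ideal.Quotient.mk_surjective a
    rw [Ideal.Quotient.eq_zero_iff_mem, ← hinf, Ideal.mem_iInf]
    intro d
    have := congrFun ha d
    exact (Ideal.Quotient.eq_zero_iff_mem (a := x) (I := Ideal.span {Polynomial.cyclotomic (d : ℕ) Λ})).mp this
  · intro g
    obtain ⟨r, hr⟩ := Ideal.pi_quotient_surjective hpair g
    refine ⟨Ideal.Quotient.mk _ r, ?_⟩
    funext d
    exact hr d
end

section
/- Let A be a finite abelian group and p a prime not dividing |A|. Then the natural ring homomorphism 𝔽_p[A] → ∏_C 𝔽_p[C], given by the projections to group algebras of all cyclic quotient groups C of A, is injective (hence an isomorphism, since both sides have the same 𝔽_p-dimension |A| = Σ_C φ(|C|)). -/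
/-- For a finite abelian group `A` and a prime `p ∤ |A|`, the natural map
`𝔽_p[A] → ∏_{B ≤ A, A/B cyclic} 𝔽_p[A/B]` is injective. -/
theorem stmt5 (A : Type*) [CommGroup A] [Fintype A] (p : ℕ) (hp : p.Prime)
    (hpA : ¬ p ∣ Nat.card A) :
    Function.Injective
      (Pi.ringHom (fun B : {B : Subgroup A // IsCyclic (A ⧸ (B : Subgroup A))} =>
        MonoidAlgebra.mapDomainRingHom (ZMod p) (QuotientGroup.mk' (B : Subgroup A)))) := by
  classical
  haveI : Fact p.Prime := ⟨hp⟩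
  set K := AlgebraicClosure (ZMod p) with hK
  have hcharK : CharP K p := inferInstance
  have hcard : (Nat.card A : K) ≠ 0 := by
    rw [Ne, CharP.cast_eq_zero_iff K p]
    exact hpA
  have hexp : ¬ p ∣ Monoid.exponent A := fun h =>
    hpA (h.trans (Group.exponent_dvd_card.trans (by rw [Nat.card_eq_fintype_card])))
  haveI : NeZero ((Monoid.exponent A : K)) := by
    refine ⟨?_⟩
    rw [Ne, CharP.cast_eq_zero_iff K p]
    exact hexp
  -- characters are finitely many, as many as |A|
  obtain ⟨e⟩ := CommGroup.monoidHom_mulEquiv_of_hasEnoughRootsOfUnity A K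
  haveI : Finite (A →* Kˣ) := Finite.of_equiv A e.symm.toEquiv
  haveI : Fintype (A →* Kˣ) := Fintype.ofFinite _
  have hcardCh : (Fintype.card (A →* Kˣ) : K) ≠ 0 := by
    rwa [← Nat.card_eq_fintype_card, Nat.card_congr e.toEquiv]
  rw [injective_iff_map_eq_zero]
  intro x hx
  set X : A → K := fun a => algebraMap (ZMod p) K (x.coeff a) with hX
  -- each character sum vanishes
  have hvanish : ∀ χ : A →* Kˣ, ∑ a : A, X a * (χ a : K) = 0 := by
    intro χ
    have hcyc : IsCyclic (A ⧸ χ.ker) := by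
      have e' := QuotientGroup.quotientKerEquivRange χ
      exact isCyclic_of_surjective e'.symm e'.symm.surjective
    have h0 : MonoidAlgebra.mapDomainRingHom (ZMod p) (QuotientGroup.mk' χ.ker) x = 0 :=
      congrFun hx ⟨χ.ker, hcyc⟩
    have h0' : Finsupp.mapDomain (QuotientGroup.mk' χ.ker) x.coeff = 0 := congrArg MonoidAlgebra.coeff h0
    set χ' : A ⧸ χ.ker →* K :=
      QuotientGroup.lift χ.ker ((Units.coeHom K).comp χ)
        (fun b hb => by simp [MonoidHom.mem_ker.mp hb]) with hχ'
    have key : (Finsupp.mapDomain (QuotientGroup.mk' χ.ker) x.coeff).sum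
          (fun c r => algebraMap (ZMod p) K r * χ' c)
        = x.coeff.sum (fun a r => algebraMap (ZMod p) K r * χ' (QuotientGroup.mk' χ.ker a)) :=
      Finsupp.sum_mapDomain_index (by simp) (fun c r₁ r₂ => by rw [map_add, add_mul])
    rw [h0', Finsupp.sum_zero_index] at key
    have : x.coeff.sum (fun a r => algebraMap (ZMod p) K r * χ' (QuotientGroup.mk' χ.ker a))
        = ∑ a : A, X a * (χ a : K) := by
      rw [Finsupp.sum_fintype _ _ (fun a => by simp)]
      refine Finset.sum_congr rfl fun a _ => ?_
      simp [hχ', hX]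
    rw [this] at key
    exact key.symm
  -- orthogonality: sum over characters
  have horth : ∀ b : A, b ≠ 1 → ∑ χ : A →* Kˣ, ((χ b : K)) = 0 := by
    intro b hb
    obtain ⟨χ₀, hχ₀⟩ := CommGroup.exists_apply_ne_one_of_hasEnoughRootsOfUnity A K hb
    set ev : (A →* Kˣ) →* K :=
      (Units.coeHom K).comp ⟨⟨fun χ => χ b, rfl⟩, fun χ ψ => rfl⟩ with hev
    have hev1 : ev ≠ 1 := by
      intro h
      apply hχ₀
      have := DFunLike.congr_fun h χ₀
      exact Units.ext (by simpa [hev] using this)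
    exact sum_hom_units_eq_zero ev hev1
  -- Fourier inversion
  have hzero : ∀ a₀ : A, X a₀ = 0 := by
    intro a₀
    have hT : ∑ χ : A →* Kˣ, ((χ a₀ : K))⁻¹ * ∑ a : A, X a * (χ a : K) = 0 := by
      simp [hvanish]
    have hswap : ∑ χ : A →* Kˣ, ((χ a₀ : K))⁻¹ * ∑ a : A, X a * (χ a : K)
        = ∑ a : A, X a * ∑ χ : A →* Kˣ, ((χ (a * a₀⁻¹) : K)) := by
      rw [Finset.sum_congr rfl fun χ _ => Finset.mul_sum _ _ _,
        Finset.sum_congr rfl fun a _ =>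
          Finset.mul_sum Finset.univ (fun χ : A →* Kˣ => ((χ (a * a₀⁻¹) : K))) (X a)]
      rw [Finset.sum_comm]
      refine Finset.sum_congr rfl fun a _ => ?_
      refine Finset.sum_congr rfl fun χ _ => ?_
      rw [map_mul, map_inv]
      push_cast
      ring
    have hdiag : ∑ a : A, X a * ∑ χ : A →* Kˣ, ((χ (a * a₀⁻¹) : K))
        = X a₀ * Fintype.card (A →* Kˣ) := by
      rw [Finset.sum_eq_single a₀]
      · simp
      · intro a _ ha
        rw [horth _ (by simpa [mul_inv_eq_one] using ha), mul_zero]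
      · intro h; exact absurd (Finset.mem_univ a₀) h
    rw [hswap, hdiag] at hT
    exact (mul_eq_zero.mp hT).resolve_right hcardCh
  have hxz : ∀ a : A, x.coeff a = 0 := fun a =>
    (algebraMap (ZMod p) K).injective (by simpa [hX] using hzero a)
  exact MonoidAlgebra.coeff_eq_zero.mp (Finsupp.ext hxz)
end

section
/- Let Â be a finite abelian group and let R(Â) = ℤ[Â] denote its representation ring (equal to the group ring of Â since Â is abelian, identifying characters with group elements). If ξ ∈ R(Â) ⊗ ℤ[1/|Â|] has the property that its restriction to every cyclic subgroup Ĉ ≤ Â lies in p·(R(Ĉ) ⊗ ℤ[1/|Â|]) for a prime p ∤ |Â|, then ξ ∈ p·(R(Â) ⊗ ℤ[1/|Â|]). -/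
open Module

/- coefficientwise characterization of the ideal `span {p}` in a monoid algebra -/
lemma Stmt6.coeff_span {R : Type*} [CommRing R] {G : Type*} [CommMonoid G] (p : ℕ)
    (x : MonoidAlgebra R G) :
    x ∈ Ideal.span {(p : MonoidAlgebra R G)} ↔ ∀ g : G, ∃ y : R, x.coeff g = (p : R) * y := by
  rw [Ideal.mem_span_singleton]
  constructor
  · rintro ⟨y, rfl⟩ g
    refine ⟨y.coeff g, ?_⟩
    rw [MonoidAlgebra.natCast_def, MonoidAlgebra.coeff_single_one_mul]
  · intro h
    choose c hc using h
    classical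
    refine ⟨∑ g ∈ x.coeff.support, MonoidAlgebra.single g (c g), ?_⟩
    rw [MonoidAlgebra.natCast_def]
    ext g
    rw [MonoidAlgebra.coeff_single_one_mul]
    rw [MonoidAlgebra.coeff_sum, Finset.sum_apply']
    simp only [MonoidAlgebra.coeff_single, Finsupp.single_apply, Finset.mul_sum, mul_ite, mul_zero]
    rw [Finset.sum_ite_eq' x.coeff.support g (fun g => (p : R) * c g)]
    split_ifs with hg
    · exact hc g
    · rw [Finsupp.notMem_support_iff.mp hg]

noncomputable abbrev Stmt6.KK (p : ℕ) [Fact p.Prime] := AlgebraicClosure (ZMod p)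

namespace Stmt6

lemma castN_ne_zero (p : ℕ) [Fact p.Prime] (N : ℕ) (hpN : ¬ p ∣ N) :
    (((N : ℤ) : ℤ) : KK p) ≠ 0 := by
  have h1 : algebraMap (ZMod p) (KK p) ((N : ℤ) : ZMod p) = ((N : ℤ) : KK p) :=
    map_intCast (algebraMap (ZMod p) (KK p)) (N : ℤ)
  rw [← h1]
  intro h
  have h2 : ((N : ℤ) : ZMod p) = 0 :=
    (map_eq_zero_iff _ (algebraMap (ZMod p) (KK p)).injective).mp h
  rw [ZMod.intCast_zmod_eq_zero_iff_dvd] at h2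
  exact hpN (Int.ofNat_dvd.mp h2)

noncomputable def phi (p : ℕ) [Fact p.Prime] (N : ℕ) (hpN : ¬ p ∣ N) :
    Localization.Away ((N : ℤ)) →+* KK p :=
  Localization.awayLift (Int.castRingHom (KK p)) (N : ℤ)
    (by simpa using (isUnit_iff_ne_zero.mpr (castN_ne_zero p N hpN)))

lemma phi_intCast (p : ℕ) [Fact p.Prime] (N : ℕ) (hpN : ¬ p ∣ N) (a : ℤ) :
    phi p N hpN ((a : ℤ) : Localization.Away ((N : ℤ))) = (a : KK p) := by
  rw [show ((a : ℤ) : Localization.Away ((N : ℤ))) = algebraMap ℤ _ a from (map_intCast _ a).symm,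
    phi]
  simp [Localization.awayLift, IsLocalization.Away.lift]

lemma phi_ker (p : ℕ) [Fact p.Prime] (N : ℕ) (hpN : ¬ p ∣ N)
    {x : Localization.Away ((N : ℤ))} (hx : phi p N hpN x = 0) :
    x ∈ Ideal.span {(p : Localization.Away ((N : ℤ)))} := by
  obtain ⟨⟨a, s⟩, h⟩ := IsLocalization.surj (Submonoid.powers ((N : ℤ))) x
  simp only at h
  have h2 : phi p N hpN (algebraMap ℤ _ a) = 0 := by
    rw [← h, map_mul, hx, zero_mul]
  rw [show algebraMap ℤ (Localization.Away ((N : ℤ))) a = ((a : ℤ) : _) from map_intCast _ a,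
    phi_intCast] at h2
  have h3 : algebraMap (ZMod p) (KK p) ((a : ZMod p)) = (a : KK p) :=
    map_intCast (algebraMap (ZMod p) (KK p)) a
  have h4 : (a : ZMod p) = 0 :=
    (map_eq_zero_iff _ (algebraMap (ZMod p) (KK p)).injective).mp (h3.trans h2)
  obtain ⟨b, hb⟩ := (ZMod.intCast_zmod_eq_zero_iff_dvd a p).mp h4
  have hs : IsUnit (algebraMap ℤ (Localization.Away ((N : ℤ))) (s : ℤ)) :=
    IsLocalization.map_units _ s
  rw [Ideal.mem_span_singleton]
  refine ⟨algebraMap ℤ _ b * ↑hs.unit⁻¹, ?_⟩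
  have key : x * algebraMap ℤ _ (s : ℤ)
      = (p : Localization.Away ((N : ℤ))) * algebraMap ℤ _ b := by
    rw [h, hb]
    push_cast
    ring
  calc x = x * algebraMap ℤ _ (s : ℤ) * ↑hs.unit⁻¹ := by
        rw [mul_assoc, hs.mul_val_inv, mul_one]
      _ = (p : _) * (algebraMap ℤ _ b * ↑hs.unit⁻¹) := by rw [key]; ring

lemma chars_span (K : Type*) [Field K] [IsAlgClosed K] (A : Type*) [CommGroup A] [Fintype A]
    [NeZero ((Monoid.exponent A : K))]
    (ζ : MonoidAlgebra K A) (h : ∀ χ : A →* Kˣ, ∑ a : A, ζ.coeff a * (χ a : K) = 0) : ζ = 0 := by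
  classical
  obtain ⟨e⟩ := CommGroup.monoidHom_mulEquiv_of_hasEnoughRootsOfUnity A K
  haveI : Finite (A →* Kˣ) := Finite.of_equiv A e.symm.toEquiv
  haveI : Fintype (A →* Kˣ) := Fintype.ofFinite _
  haveI : Nonempty (A →* Kˣ) := ⟨1⟩
  have hinj : Function.Injective (fun χ : A →* Kˣ => (Units.coeHom K).comp χ) := by
    intro χ₁ χ₂ hx
    ext a
    exact DFunLike.congr_fun hx a
  have hli : LinearIndependent K (fun χ : A →* Kˣ => (fun a => (χ a : K))) :=
    (linearIndependent_monoidHom A K).comp _ hinj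
  have hcard : Fintype.card (A →* Kˣ) = finrank K (A → K) := by
    rw [Module.finrank_pi, Fintype.card_congr e.toEquiv]
  have hspan := hli.span_eq_top_of_card_eq_finrank hcard
  let L : (A → K) →ₗ[K] K :=
    { toFun := fun g => ∑ a : A, ζ.coeff a * g a
      map_add' := by intro g₁ g₂; simp [mul_add, Finset.sum_add_distrib]
      map_smul' := by intro c g; simp [Finset.mul_sum, mul_left_comm] }
  have hL : ∀ v, L v = 0 := by
    have hle : Submodule.span K (Set.range fun χ : A →* Kˣ => (fun a => (χ a : K))) ≤
        LinearMap.ker L := by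
      rw [Submodule.span_le]
      rintro _ ⟨χ, rfl⟩
      exact LinearMap.mem_ker.mpr (h χ)
    intro v
    exact hle (hspan ▸ Submodule.mem_top)
  ext a
  have := hL (Pi.single a 1)
  simpa [L, Pi.single_apply, mul_ite, Finset.sum_ite_eq'] using this

end Stmt6

lemma Stmt6.liftNCRingHom_single {k R G : Type*} [Semiring k] [Semiring R] [Monoid G]
    (f : k →+* R) (g : G →* R) (h : ∀ x y, Commute (f x) (g y)) (a : G) (b : k) :
    MonoidAlgebra.liftNCRingHom f g h (MonoidAlgebra.single a b) = f b * g a :=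
  MonoidAlgebra.liftNC_single _ _ _ _

set_option maxHeartbeats 1000000 in
/-- Artin-type divisibility: over `Λ = ℤ[1/|A|]`, if `ξ` in the group algebra `Λ[A]` maps into
`p·Λ[C]` for every cyclic quotient `C` of `A` (`p` a prime not dividing `|A|`),
then `ξ ∈ p·Λ[A]`. -/
theorem stmt6 (A : Type*) [CommGroup A] [Fintype A] (p : ℕ) (hp : p.Prime)
    (hpA : ¬ p ∣ Nat.card A)
    (ξ : MonoidAlgebra (Localization.Away ((Nat.card A : ℤ))) A)
    (hξ : ∀ B : Subgroup A, IsCyclic (A ⧸ B) →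
      MonoidAlgebra.mapDomainRingHom (Localization.Away ((Nat.card A : ℤ)))
          (QuotientGroup.mk' B) ξ ∈
        Ideal.span {(p : MonoidAlgebra (Localization.Away ((Nat.card A : ℤ))) (A ⧸ B))}) :
    ξ ∈ Ideal.span {(p : MonoidAlgebra (Localization.Away ((Nat.card A : ℤ))) A)} := by
  classical
  haveI := Fact.mk hp
  let K := Stmt6.KK p
  let φ : Localization.Away ((Nat.card A : ℤ)) →+* K := Stmt6.phi p (Nat.card A) hpA
  -- `p = 0` in `K`
  have hpK : ((p : ℕ) : K) = 0 := by
    have : CharP K p := charP_of_injective_algebraMap (algebraMap (ZMod p) K).injective p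
    exact CharP.cast_eq_zero K p
  -- exponent is nonzero in `K`
  have hpe : ¬ p ∣ Monoid.exponent A := fun hd =>
    hpA (hd.trans (Nat.card_eq_fintype_card (α := A) ▸ Group.exponent_dvd_card))
  haveI : NeZero ((Monoid.exponent A : K)) := by
    refine ⟨fun h => Stmt6.castN_ne_zero p (Monoid.exponent A) hpe ?_⟩
    push_cast
    push_cast at h
    exact h
  -- push ξ into K[A]
  let ζ : MonoidAlgebra K A := MonoidAlgebra.ofCoeff (Finsupp.mapRange φ φ.map_zero ξ.coeff)
  have hζ : ∀ a : A, ζ.coeff a = φ (ξ.coeff a) := fun a => Finsupp.mapRange_apply (hf := φ.map_zero)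
  -- images in cyclic quotients vanish
  have hquot : ∀ B : Subgroup A, IsCyclic (A ⧸ B) →
      MonoidAlgebra.mapDomain (QuotientGroup.mk' B) ζ = 0 := by
    intro B hB
    have hmem := (Stmt6.coeff_span p _).mp (hξ B hB)
    show MonoidAlgebra.ofCoeff (Finsupp.mapDomain _ (Finsupp.mapRange φ φ.map_zero ξ.coeff)) = 0
    rw [Finsupp.mapDomain_mapRange _ _ _ _ (map_add φ)]
    ext x
    obtain ⟨y, hy⟩ := hmem x
    rw [MonoidAlgebra.coeff_ofCoeff, Finsupp.mapRange_apply]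
    rw [show (MonoidAlgebra.mapDomainRingHom (Localization.Away ((Nat.card A : ℤ)))
          (QuotientGroup.mk' B)) ξ
        = MonoidAlgebra.ofCoeff (Finsupp.mapDomain (QuotientGroup.mk' B) ξ.coeff) from rfl,
        MonoidAlgebra.coeff_ofCoeff] at hy
    rw [hy, map_mul, map_natCast, hpK, zero_mul]
    rfl
  -- every character pairing vanishes
  have hchar : ∀ χ : A →* Kˣ, ∑ a : A, ζ.coeff a * (χ a : K) = 0 := by
    intro χ
    haveI : Finite χ.range := Finite.of_surjective _ χ.rangeRestrict_surjective
    have hcyc : IsCyclic (A ⧸ χ.ker) := by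
      have e := QuotientGroup.quotientKerEquivRange χ
      exact isCyclic_of_surjective e.symm e.symm.surjective
    have hm := hquot χ.ker hcyc
    let E : MonoidAlgebra K A →+* K :=
      MonoidAlgebra.liftNCRingHom (RingHom.id K) ((Units.coeHom K).comp χ)
        (fun _ _ => Commute.all _ _)
    let Eq : MonoidAlgebra K (A ⧸ χ.ker) →+* K :=
      MonoidAlgebra.liftNCRingHom (RingHom.id K)
        ((Units.coeHom K).comp (QuotientGroup.kerLift χ)) (fun _ _ => Commute.all _ _)
    have hfact : E = Eq.comp (MonoidAlgebra.mapDomainRingHom K (QuotientGroup.mk' χ.ker)) := by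
      apply MonoidAlgebra.ringHom_ext
      · intro b
        rw [RingHom.comp_apply]
        rw [show (MonoidAlgebra.mapDomainRingHom K (QuotientGroup.mk' χ.ker))
              (MonoidAlgebra.single (1 : A) b)
            = MonoidAlgebra.single ((QuotientGroup.mk' χ.ker) (1 : A)) b from
          MonoidAlgebra.mapDomain_single]
        rw [Stmt6.liftNCRingHom_single, Stmt6.liftNCRingHom_single]
        simp
      · intro a
        rw [RingHom.comp_apply]
        rw [show (MonoidAlgebra.mapDomainRingHom K (QuotientGroup.mk' χ.ker))
              (MonoidAlgebra.single a (1 : K))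
            = MonoidAlgebra.single ((QuotientGroup.mk' χ.ker) a) (1 : K) from
          MonoidAlgebra.mapDomain_single]
        rw [Stmt6.liftNCRingHom_single, Stmt6.liftNCRingHom_single]
        have hk : QuotientGroup.kerLift χ ((QuotientGroup.mk' χ.ker) a) = χ a :=
          QuotientGroup.kerLift_mk χ a
        simp [hk]
    have hEζ : E ζ = ∑ a : A, ζ.coeff a * (χ a : K) := by
      have h1 : E ζ = ∑ a ∈ ζ.coeff.support, ζ.coeff a * (χ a : K) := by
        conv_lhs => rw [← MonoidAlgebra.sum_coeff_single ζ]
        rw [Finsupp.sum, map_sum]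
        refine Finset.sum_congr rfl fun a _ => ?_
        rw [Stmt6.liftNCRingHom_single]
        rfl
      rw [h1]
      refine Finset.sum_subset (Finset.subset_univ _) fun a _ ha => ?_
      rw [Finsupp.notMem_support_iff.mp ha, zero_mul]
    rw [← hEζ, hfact]
    show Eq (MonoidAlgebra.mapDomainRingHom K (QuotientGroup.mk' χ.ker) ζ) = 0
    rw [show (MonoidAlgebra.mapDomainRingHom K (QuotientGroup.mk' χ.ker)) ζ
        = MonoidAlgebra.mapDomain (QuotientGroup.mk' χ.ker) ζ from rfl, hm, map_zero]
  -- conclude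
  have hz : ζ = 0 := Stmt6.chars_span K A ζ hchar
  rw [Stmt6.coeff_span]
  intro a
  have : φ (ξ.coeff a) = 0 := by rw [← hζ a, hz]; rfl
  have := Stmt6.phi_ker p (Nat.card A) hpA this
  rw [Ideal.mem_span_singleton] at this
  obtain ⟨y, hy⟩ := this
  exact ⟨y, hy⟩
end

section
/- Let T' be a finite abelian group, Λ = ℤ[1/|T'|]. For each cyclic quotient σ of T' of order n_σ, let R̃(σ) = Λ[t]/(Φ_{n_σ}(t)). Then the canonical ring homomorphism Λ[T'] → ∏_σ R̃(σ), whose σ-component is induced by the quotient map T' → σ ≅ ℤ/n_σ composed with sending the generator to t, is an isomorphism of rings. -/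
open Polynomial

section Aux

lemma stmt7aux_dvd {S : Type*} [CommRing S] [IsDomain S] {ζ : S} {n m : ℕ}
    (hn : 0 < n) (hζ : IsPrimitiveRoot ζ n) (hm0 : 0 < m) (hmn : m < n) :
    (1 - ζ ^ m) ∣ (n : S) := by
  classical
  have h1mem : (1 : S) ∈ nthRootsFinset n (1 : S) := by
    rw [Polynomial.mem_nthRootsFinset hn]; exact one_pow n
  have hmmem : ζ ^ m ∈ (nthRootsFinset n (1 : S)).erase 1 := by
    refine Finset.mem_erase.mpr ⟨hζ.pow_ne_one_of_pos_of_lt hm0.ne' hmn, ?_⟩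
    rw [Polynomial.mem_nthRootsFinset hn, ← pow_mul, mul_comm, pow_mul, hζ.pow_eq_one, one_pow]
  have h2 : ((X : S[X]) - C 1) * ∑ i ∈ Finset.range n, X ^ i =
      (X - C 1) * ∏ μ ∈ (nthRootsFinset n (1 : S)).erase 1, (X - C μ) := by
    calc ((X : S[X]) - C 1) * ∑ i ∈ Finset.range n, X ^ i
        = (X : S[X]) ^ n - 1 := by rw [map_one, mul_comm]; exact geom_sum_mul X n
      _ = ∏ μ ∈ nthRootsFinset n (1 : S), (X - C μ) := X_pow_sub_one_eq_prod hn hζ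
      _ = (X - C 1) * ∏ μ ∈ (nthRootsFinset n (1 : S)).erase 1, (X - C μ) := by
          rw [← Finset.mul_prod_erase _ _ h1mem]
  have h4 := mul_left_cancel₀ (monic_X_sub_C (1:S)).ne_zero h2
  have h5 := congrArg (Polynomial.eval 1) h4
  simp only [eval_finset_sum, eval_pow, eval_X, one_pow, Finset.sum_const, Finset.card_range,
    nsmul_eq_mul, mul_one, eval_prod, eval_sub, eval_C, eval_one] at h5
  rw [h5]
  exact Finset.dvd_prod_of_mem (fun x => 1 - x) hmmem

lemma stmt7aux_domain (n : ℕ) (hn : 0 < n) : IsDomain (AdjoinRoot (cyclotomic n ℤ)) := by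
  have hirr : Irreducible (cyclotomic n ℤ) := cyclotomic.irreducible hn
  have hprime : Prime (cyclotomic n ℤ) :=
    (UniqueFactorizationMonoid.irreducible_iff_prime).mp hirr
  have : (Ideal.span {cyclotomic n ℤ} : Ideal ℤ[X]).IsPrime :=
    (Ideal.span_singleton_prime hprime.ne_zero).mpr hprime
  exact Ideal.Quotient.isDomain_iff_prime _ |>.mpr this

noncomputable def stmt7aux_psi (n : ℕ) (hn : 0 < n) : AdjoinRoot (cyclotomic n ℤ) →+* ℂ :=
  AdjoinRoot.lift (Int.castRingHom ℂ) (Complex.exp (2 * Real.pi * Complex.I / n)) (by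
    have hprim := Complex.isPrimitiveRoot_exp n hn.ne'
    rw [eval₂_eq_eval_map, map_cyclotomic]
    exact hprim.isRoot_cyclotomic hn)

lemma stmt7aux_unit (n : ℕ) (N : ℤ) (hn : 0 < n) (hdvd : (n:ℤ) ∣ N) {m : ℕ}
    (hm0 : 0 < m) (hmn : m < n) :
    IsUnit ((AdjoinRoot.root (cyclotomic n (Localization.Away N))) ^ m - 1) := by
  haveI hdom := stmt7aux_domain n hn
  set S := AdjoinRoot (cyclotomic n ℤ) with hS
  set Λ := Localization.Away N with hΛ
  set R := AdjoinRoot (cyclotomic n Λ) with hR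
  haveI : NeZero ((n : S)) := by
    refine ⟨fun h => ?_⟩
    have := congrArg (stmt7aux_psi n hn) h
    rw [map_natCast, map_zero] at this
    exact_mod_cast hn.ne' (by exact_mod_cast this)
  have hroot : IsRoot (cyclotomic n S) (AdjoinRoot.root _) := by
    rw [← map_cyclotomic n (AdjoinRoot.of (cyclotomic n ℤ)), IsRoot, eval_map]
    exact AdjoinRoot.eval₂_root _
  have hprim : IsPrimitiveRoot (AdjoinRoot.root (cyclotomic n ℤ)) n :=
    (isRoot_cyclotomic_iff).mp hroot
  have hdvd1 : (1 - (AdjoinRoot.root (cyclotomic n ℤ)) ^ m) ∣ (n : S) :=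
    stmt7aux_dvd hn hprim hm0 hmn
  have hev : (cyclotomic n ℤ).eval₂ (algebraMap ℤ R) (AdjoinRoot.root (cyclotomic n Λ)) = 0 := by
    rw [eval₂_eq_eval_map, map_cyclotomic, ← map_cyclotomic n (AdjoinRoot.of (cyclotomic n Λ)),
      eval_map]
    exact AdjoinRoot.eval₂_root _
  set ρ : S →+* R := AdjoinRoot.lift (algebraMap ℤ R) _ hev with hρ
  have hdvd2 : (1 - (AdjoinRoot.root (cyclotomic n Λ)) ^ m) ∣ ((n : R)) := by
    have := map_dvd ρ hdvd1
    rwa [map_natCast, map_sub, map_one, map_pow, AdjoinRoot.lift_root] at this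
  have hunitN : IsUnit ((N : Λ)) := by
    have := IsLocalization.Away.algebraMap_isUnit (S := Λ) N
    rwa [eq_intCast] at this
  have hunitn : IsUnit ((n : R)) := by
    have hd : ((n:ℕ) : Λ) ∣ ((N : Λ)) := by
      have := map_dvd (Int.castRingHom Λ) hdvd
      simp only [eq_intCast, Int.cast_natCast] at this
      exact_mod_cast this
    have h1 : IsUnit ((n : Λ)) := isUnit_of_dvd_unit hd hunitN
    have := h1.map (algebraMap Λ R)
    rwa [map_natCast] at this
  have : IsUnit (1 - (AdjoinRoot.root (cyclotomic n Λ)) ^ m) :=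
    isUnit_of_dvd_unit hdvd2 hunitn
  simpa using this.neg

lemma stmt7aux_inj (N : ℤ) (h : Localization.Away N →+* ℂ) : Function.Injective h := by
  set Λ := Localization.Away N
  have key : ∀ x : Λ, h x = 0 → x = 0 := by
    intro x hx
    obtain ⟨⟨r, s⟩, hrs⟩ := IsLocalization.surj (Submonoid.powers N) x
    have h2 := congrArg h hrs
    rw [map_mul, hx, zero_mul] at h2
    have h3 : ((r : ℂ)) = 0 := by
      rw [show ((r:ℂ)) = (h.comp (algebraMap ℤ Λ)) r from (eq_intCast _ r).symm]
      exact h2.symm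
    have hr : r = 0 := by exact_mod_cast h3
    rw [hr, map_zero] at hrs
    have hu := IsLocalization.map_units (M := Submonoid.powers N) Λ s
    exact (hu.mul_left_eq_zero).mp hrs
  intro a b hab
  have : a - b = 0 := key _ (by rw [map_sub, hab, sub_self])
  exact sub_eq_zero.mp this

lemma stmt7aux_fourier (G : Type*) [CommGroup G] [Fintype G] (η : G → ℂ)
    (h : ∀ χ : G →* ℂˣ, ∑ x, η x * (χ x : ℂ) = 0) : ∀ y, η y = 0 := by
  classical
  haveI : NeZero ((Monoid.exponent G : ℂ)) :=
    ⟨by exact_mod_cast Monoid.exponent_ne_zero_of_finite⟩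
  obtain ⟨e⟩ := CommGroup.monoidHom_mulEquiv_of_hasEnoughRootsOfUnity G ℂ
  haveI : Finite (G →* ℂˣ) := Finite.of_equiv G e.symm.toEquiv
  haveI : Fintype (G →* ℂˣ) := Fintype.ofFinite _
  haveI : Nonempty (G →* ℂˣ) := ⟨1⟩
  have key : ∀ z : G, z ≠ 1 → ∑ χ : G →* ℂˣ, ((χ z : ℂ)) = 0 := by
    intro z hz
    obtain ⟨χ₀, hχ₀⟩ := CommGroup.exists_apply_ne_one_of_hasEnoughRootsOfUnity G ℂ hz
    have hre : ∑ χ : G →* ℂˣ, (((χ₀ * χ) z : ℂ)) = ∑ χ : G →* ℂˣ, ((χ z : ℂ)) :=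
      Fintype.sum_equiv (Equiv.mulLeft χ₀) _ _ (fun χ => rfl)
    simp only [MonoidHom.mul_apply, Units.val_mul, ← Finset.mul_sum] at hre
    have hne : ((χ₀ z : ℂ)) ≠ 1 := fun hc => hχ₀ (Units.ext hc)
    have h2 : (((χ₀ z : ℂ)) - 1) * ∑ χ : G →* ℂˣ, ((χ z : ℂ)) = 0 := by
      rw [sub_mul, hre, one_mul, sub_self]
    exact (mul_eq_zero.mp h2).resolve_left (sub_ne_zero.mpr hne)
  intro y
  have h0 : ∑ χ : G →* ℂˣ, ((χ y⁻¹ : ℂ)) * ∑ x, η x * (χ x : ℂ) = 0 := by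
    simp [h]
  have h1 : ∑ x, η x * ∑ χ : G →* ℂˣ, ((χ (x * y⁻¹) : ℂ)) = 0 := by
    have hterm : ∀ (x : G) (χ : G →* ℂˣ), η x * ((χ (x * y⁻¹) : ℂ))
        = ((χ y⁻¹ : ℂ)) * (η x * ((χ x : ℂ))) := by
      intro x χ; rw [map_mul]; push_cast; ring
    calc ∑ x, η x * ∑ χ : G →* ℂˣ, ((χ (x * y⁻¹) : ℂ))
        = ∑ x, ∑ χ : G →* ℂˣ, η x * ((χ (x * y⁻¹) : ℂ)) := by simp [Finset.mul_sum]
      _ = ∑ χ : G →* ℂˣ, ∑ x, ((χ y⁻¹ : ℂ)) * (η x * ((χ x : ℂ))) := by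
          rw [Finset.sum_comm]; simp only [hterm]
      _ = ∑ χ : G →* ℂˣ, ((χ y⁻¹ : ℂ)) * ∑ x, η x * ((χ x : ℂ)) := by
          simp [Finset.mul_sum]
      _ = 0 := h0
  rw [Finset.sum_eq_single y] at h1
  · simp only [mul_inv_cancel, map_one, Units.val_one, Finset.sum_const, nsmul_eq_mul,
      mul_one, smul_eq_mul] at h1
    rcases mul_eq_zero.mp h1 with hc | hc
    · exact hc
    · have hcard : ((Fintype.card (G →* ℂˣ) : ℂ)) ≠ 0 := by
        exact_mod_cast Fintype.card_ne_zero
      exact absurd hc hcard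
  · intro x _ hxy
    rw [key (x * y⁻¹) (by simpa [mul_inv_eq_one] using hxy), mul_zero]
  · intro hy; exact absurd (Finset.mem_univ y) hy

end Aux

/-- For a finite abelian group `T'` and `Λ = ℤ[1/|T'|]`, the canonical ring homomorphism
`Λ[T'] → ∏_σ Λ[t]/(Φ_{n_σ})`, the product being over all cyclic quotients `σ = T'/B` of `T'`,
whose `σ`-component is induced by the quotient map `T' → σ ≅ ℤ/n_σ` followed by sending the
generator to `t`, is a ring isomorphism.  The components are encoded as `Λ`-algebra maps
`f B` characterized by `f B (single x 1) = t ^ (g B x)`, where `g B : T' → ℤ/n_B` is a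
surjection with kernel `B`. -/
theorem stmt7 (T' : Type*) [CommGroup T'] [Fintype T']
    (g : ∀ B : {B : Subgroup T' // IsCyclic (T' ⧸ (B : Subgroup T'))},
      T' →* Multiplicative (ZMod (Nat.card (T' ⧸ (B : Subgroup T')))))
    (hg1 : ∀ B, Function.Surjective (g B))
    (hg2 : ∀ B, (g B).ker = (B : Subgroup T'))
    (f : ∀ B : {B : Subgroup T' // IsCyclic (T' ⧸ (B : Subgroup T'))},
      MonoidAlgebra (Localization.Away ((Nat.card T' : ℤ))) T'
        →ₐ[Localization.Away ((Nat.card T' : ℤ))]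
      AdjoinRoot (Polynomial.cyclotomic (Nat.card (T' ⧸ (B : Subgroup T')))
        (Localization.Away ((Nat.card T' : ℤ)))))
    (hf : ∀ B x, f B (MonoidAlgebra.single x 1) =
      (AdjoinRoot.root (Polynomial.cyclotomic (Nat.card (T' ⧸ (B : Subgroup T')))
        (Localization.Away ((Nat.card T' : ℤ))))) ^ (Multiplicative.toAdd (g B x)).val) :
    Function.Bijective
      (fun ξ : MonoidAlgebra (Localization.Away ((Nat.card T' : ℤ))) T' =>
        fun B => f B ξ) := by
  classical
  have hNpos : 0 < Nat.card T' := Nat.card_pos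
  have hn : ∀ B : {B : Subgroup T' // IsCyclic (T' ⧸ (B : Subgroup T'))},
      0 < Nat.card (T' ⧸ (B : Subgroup T')) := fun B => Nat.card_pos
  -- surjectivity of each component
  have hsurjf : ∀ B, Function.Surjective (f B) := by
    intro B
    rw [← AlgHom.range_eq_top, eq_top_iff, ← AdjoinRoot.adjoinRoot_eq_top,
      Algebra.adjoin_le_iff]
    rw [Set.singleton_subset_iff]
    rcases Nat.lt_or_ge 1 (Nat.card (T' ⧸ (B : Subgroup T'))) with h1 | h1
    · haveI : Fact (1 < Nat.card (T' ⧸ (B : Subgroup T'))) := ⟨h1⟩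
      obtain ⟨x₁, hx₁⟩ := hg1 B (Multiplicative.ofAdd 1)
      have hone : f B (MonoidAlgebra.single x₁ 1) = AdjoinRoot.root
          (Polynomial.cyclotomic (Nat.card (T' ⧸ (B : Subgroup T')))
          (Localization.Away ((Nat.card T' : ℤ)))) := by
        rw [hf B x₁, hx₁, toAdd_ofAdd, ZMod.val_one, pow_one]
      exact ⟨MonoidAlgebra.single x₁ 1, hone⟩
    · have hn1 : Nat.card (T' ⧸ (B : Subgroup T')) = 1 := le_antisymm h1 (hn B)
      have hp : Polynomial.cyclotomic (Nat.card (T' ⧸ (B : Subgroup T')))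
          (Localization.Away ((Nat.card T' : ℤ))) = Polynomial.X - 1 := by
        rw [hn1, Polynomial.cyclotomic_one]
      have hr1 : (AdjoinRoot.root (Polynomial.cyclotomic (Nat.card (T' ⧸ (B : Subgroup T')))
          (Localization.Away ((Nat.card T' : ℤ))))) - 1 = 0 := by
        rw [← AdjoinRoot.mk_X, show (1 : AdjoinRoot (Polynomial.cyclotomic
            (Nat.card (T' ⧸ (B : Subgroup T'))) (Localization.Away ((Nat.card T' : ℤ))))) =
          AdjoinRoot.mk _ 1 from (map_one _).symm, ← map_sub, ← hp, AdjoinRoot.mk_self]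
      rw [sub_eq_zero.mp hr1]
      exact Subalgebra.one_mem _
  -- kernel membership facts
  have hker1 : ∀ (B : {B : Subgroup T' // IsCyclic (T' ⧸ (B : Subgroup T'))}) (x : T'), x ∈ (B : Subgroup T') → f B (MonoidAlgebra.single x 1) = 1 := by
    intro B x hx
    haveI : NeZero (Nat.card (T' ⧸ (B : Subgroup T'))) := ⟨(hn B).ne'⟩
    have hgx : g B x = 1 := by rw [← MonoidHom.mem_ker, hg2 B]; exact hx
    rw [hf B x, hgx]
    simp
  have hker2 : ∀ (B : {B : Subgroup T' // IsCyclic (T' ⧸ (B : Subgroup T'))}) (x : T'), x ∉ (B : Subgroup T') → IsUnit (f B (MonoidAlgebra.single x 1) - 1) := by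
    intro B x hx
    haveI : NeZero (Nat.card (T' ⧸ (B : Subgroup T'))) := ⟨(hn B).ne'⟩
    have hgx : g B x ≠ 1 := fun hc => hx (by rw [← hg2 B]; exact hc)
    have hk0 : Multiplicative.toAdd (g B x) ≠ 0 := by
      simpa [toAdd_eq_zero] using hgx
    have hm0 : 0 < (Multiplicative.toAdd (g B x)).val :=
      Nat.pos_of_ne_zero (fun hc => hk0 ((ZMod.val_eq_zero _).mp hc))
    have hmn : (Multiplicative.toAdd (g B x)).val < Nat.card (T' ⧸ (B : Subgroup T')) :=
      ZMod.val_lt _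
    rw [hf B x]
    exact stmt7aux_unit _ _ (hn B)
      (Int.natCast_dvd_natCast.mpr (Subgroup.card_quotient_dvd_card _)) hm0 hmn
  -- pairwise comaximality
  have hpair : ∀ (B B₀ : {B : Subgroup T' // IsCyclic (T' ⧸ (B : Subgroup T'))}), B ≠ B₀ → ∃ v, f B v = 0 ∧ f B₀ v = 1 := by
    intro B B₀ hne
    have hBne : (B : Subgroup T') ≠ (B₀ : Subgroup T') := fun hc => hne (Subtype.ext hc)
    have hx : ∃ x, (x ∈ (B : Subgroup T') ∧ x ∉ (B₀ : Subgroup T')) ∨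
        (x ∈ (B₀ : Subgroup T') ∧ x ∉ (B : Subgroup T')) := by
      by_contra hc
      push_neg at hc
      exact hBne (Subgroup.ext (fun x => ⟨(hc x).1, (hc x).2⟩))
    obtain ⟨x, hcase⟩ := hx
    rcases hcase with ⟨hxB, hxB₀⟩ | ⟨hxB₀, hxB⟩
    · have ha0 : f B (MonoidAlgebra.single x 1 - 1) = 0 := by
        rw [map_sub, map_one, hker1 B x hxB, sub_self]
      have hau : IsUnit (f B₀ (MonoidAlgebra.single x 1 - 1)) := by
        rw [map_sub, map_one]; exact hker2 B₀ x hxB₀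
      obtain ⟨w, hw⟩ := hsurjf B₀ (↑hau.unit⁻¹)
      refine ⟨(MonoidAlgebra.single x 1 - 1) * w, ?_, ?_⟩
      · rw [map_mul, ha0, zero_mul]
      · rw [map_mul, hw, hau.mul_val_inv]
    · have ha0 : f B₀ (MonoidAlgebra.single x 1 - 1) = 0 := by
        rw [map_sub, map_one, hker1 B₀ x hxB₀, sub_self]
      have hau : IsUnit (f B (MonoidAlgebra.single x 1 - 1)) := by
        rw [map_sub, map_one]; exact hker2 B x hxB
      obtain ⟨w, hw⟩ := hsurjf B (↑hau.unit⁻¹)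
      refine ⟨1 - (MonoidAlgebra.single x 1 - 1) * w, ?_, ?_⟩
      · rw [map_sub, map_one, map_mul, hw, hau.mul_val_inv, sub_self]
      · rw [map_sub, map_one, map_mul, ha0, zero_mul, sub_zero]
  haveI : Finite (Subgroup T') :=
    Finite.of_injective (fun B => (B : Set T')) SetLike.coe_injective
  haveI : Fintype {B : Subgroup T' // IsCyclic (T' ⧸ (B : Subgroup T'))} := Fintype.ofFinite _
  constructor
  · -- injectivity
    have hinj0 : ∀ ξ : MonoidAlgebra (Localization.Away ((Nat.card T' : ℤ))) T',
        (∀ B, f B ξ = 0) → ξ = 0 := by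
      intro ξ hξ
      have hNunit : IsUnit ((Int.castRingHom ℂ) ((Nat.card T' : ℤ))) := by
        rw [eq_intCast]
        exact isUnit_iff_ne_zero.mpr (by exact_mod_cast hNpos.ne')
      set hc : Localization.Away ((Nat.card T' : ℤ)) →+* ℂ :=
        IsLocalization.Away.lift ((Nat.card T' : ℤ)) hNunit with hhc
      have hcinj := stmt7aux_inj _ hc
      have hchar : ∀ χ : T' →* ℂˣ, ∑ x, hc (ξ.coeff x) * ((χ x : ℂ)) = 0 := by
        intro χ
        haveI : Finite χ.range := Finite.of_surjective _ χ.rangeRestrict_surjective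
        have hcyc : IsCyclic (T' ⧸ χ.ker) :=
          isCyclic_of_surjective (QuotientGroup.quotientKerEquivRange χ).symm
            (MulEquiv.surjective _)
        set B : {B : Subgroup T' // IsCyclic (T' ⧸ (B : Subgroup T'))} := ⟨χ.ker, hcyc⟩ with hB
        haveI : NeZero (Nat.card (T' ⧸ (B : Subgroup T'))) := ⟨(hn B).ne'⟩
        have hgker : (g B).ker = χ.ker := hg2 B
        obtain ⟨x₁, hx₁⟩ := hg1 B (Multiplicative.ofAdd 1)
        have hval : ∀ x : T', χ x = (χ x₁) ^ (Multiplicative.toAdd (g B x)).val := by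
          intro x
          have hmem : x * (x₁ ^ (Multiplicative.toAdd (g B x)).val)⁻¹ ∈ (g B).ker := by
            rw [MonoidHom.mem_ker, map_mul, map_inv, map_pow, hx₁]
            have hpow : (Multiplicative.ofAdd (1 : ZMod (Nat.card (T' ⧸ (B : Subgroup T')))))
                ^ (Multiplicative.toAdd (g B x)).val
                = Multiplicative.ofAdd (((Multiplicative.toAdd (g B x)).val : 
                  ZMod (Nat.card (T' ⧸ (B : Subgroup T'))))) := by
              rw [← ofAdd_nsmul, nsmul_eq_mul, mul_one]
            rw [hpow, ZMod.natCast_rightInverse _, ofAdd_toAdd, mul_inv_cancel]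
          rw [hgker, MonoidHom.mem_ker, map_mul, map_inv, map_pow] at hmem
          exact mul_inv_eq_one.mp hmem
        have hprim : IsPrimitiveRoot ((χ x₁ : ℂ)) (Nat.card (T' ⧸ (B : Subgroup T'))) := by
          rw [IsPrimitiveRoot.coe_units_iff]
          refine ⟨?_, ?_⟩
          · have hmem : x₁ ^ (Nat.card (T' ⧸ (B : Subgroup T'))) ∈ (g B).ker := by
              rw [MonoidHom.mem_ker, map_pow, hx₁, ← ofAdd_nsmul, nsmul_eq_mul, mul_one,
                ZMod.natCast_self, ofAdd_zero]
            rw [hgker, MonoidHom.mem_ker, map_pow] at hmem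
            exact hmem
          · intro l hl
            have hmem : x₁ ^ l ∈ χ.ker := by rw [MonoidHom.mem_ker, map_pow]; exact hl
            rw [← hgker, MonoidHom.mem_ker, map_pow, hx₁, ← ofAdd_nsmul] at hmem
            have h2 : ((l : ZMod (Nat.card (T' ⧸ (B : Subgroup T'))))) = 0 := by
              simpa [nsmul_eq_mul] using hmem
            exact (ZMod.natCast_eq_zero_iff l _).mp h2
        have hcyceval : (Polynomial.cyclotomic (Nat.card (T' ⧸ (B : Subgroup T')))
            (Localization.Away ((Nat.card T' : ℤ)))).eval₂ hc ((χ x₁ : ℂ)) = 0 := by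
          rw [Polynomial.eval₂_eq_eval_map, Polynomial.map_cyclotomic]
          exact hprim.isRoot_cyclotomic (hn B)
        set ι := AdjoinRoot.lift hc _ hcyceval with hι
        have hterm : ∀ x : T', ι (f B (MonoidAlgebra.single x (ξ.coeff x)))
            = hc (ξ.coeff x) * ((χ x : ℂ)) := by
          intro x
          have h1 : (MonoidAlgebra.single x (ξ.coeff x) :
              MonoidAlgebra (Localization.Away ((Nat.card T' : ℤ))) T')
              = algebraMap (Localization.Away ((Nat.card T' : ℤ)))
                  (MonoidAlgebra (Localization.Away ((Nat.card T' : ℤ))) T') (ξ.coeff x)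
                * MonoidAlgebra.single x 1 := by
            rw [show (algebraMap (Localization.Away ((Nat.card T' : ℤ)))
                (MonoidAlgebra (Localization.Away ((Nat.card T' : ℤ))) T')) (ξ.coeff x)
              = MonoidAlgebra.single 1 (ξ.coeff x) from congrFun MonoidAlgebra.coe_algebraMap (ξ.coeff x)]
            rw [MonoidAlgebra.single_mul_single, one_mul, mul_one]
          rw [h1, map_mul, map_mul, AlgHom.commutes, AdjoinRoot.algebraMap_eq,
            AdjoinRoot.lift_of, hf B x, map_pow, AdjoinRoot.lift_root, hval x]
          push_cast
          ring
        have key : ι (f B ξ) = ∑ x, hc (ξ.coeff x) * ((χ x : ℂ)) := by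
          calc ι (f B ξ)
              = ι (f B (ξ.coeff.sum fun x c => MonoidAlgebra.single x c)) := by
                rw [MonoidAlgebra.sum_coeff_single ξ]
            _ = ∑ x ∈ ξ.coeff.support, ι (f B (MonoidAlgebra.single x (ξ.coeff x))) := by
                rw [map_finsuppSum, map_finsuppSum, Finsupp.sum]
            _ = ∑ x, ι (f B (MonoidAlgebra.single x (ξ.coeff x))) := by
                refine Finset.sum_subset (Finset.subset_univ _) ?_
                intro x _ hx
                rw [Finsupp.notMem_support_iff.mp hx]
                simp
            _ = ∑ x, hc (ξ.coeff x) * ((χ x : ℂ)) := Finset.sum_congr rfl (fun x _ => hterm x)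
        rw [← key, hξ B, map_zero]
      have hzero := stmt7aux_fourier T' (fun x => hc (ξ.coeff x)) hchar
      ext x
      have h0 : hc (ξ.coeff x) = 0 := hzero x
      exact hcinj (by simpa using h0)
    intro a b hab
    have : a - b = 0 := by
      refine hinj0 _ (fun B => ?_)
      have h2 : f B a = f B b := congrFun hab B
      rw [map_sub, h2, sub_self]
    exact sub_eq_zero.mp this
  · -- surjectivity
    have hE : ∀ B₀, ∃ e, f B₀ e = 1 ∧ ∀ B, B ≠ B₀ → f B e = 0 := by
      intro B₀
      have hv : ∀ B, ∃ v, (B ≠ B₀ → f B v = 0) ∧ f B₀ v = 1 := by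
        intro B
        by_cases h : B = B₀
        · exact ⟨1, fun hc => absurd h hc, map_one _⟩
        · obtain ⟨v, h0, h1⟩ := hpair B B₀ h
          exact ⟨v, fun _ => h0, h1⟩
      choose v hv0 hv1 using hv
      refine ⟨∏ B, v B, ?_, ?_⟩
      · rw [map_prod]
        simp [hv1]
      · intro B hB
        rw [map_prod]
        exact Finset.prod_eq_zero (Finset.mem_univ B) (hv0 B hB)
    intro y
    choose z hz using fun B => hsurjf B (y B)
    choose e he1 he0 using hE
    refine ⟨∑ B, e B * z B, ?_⟩
    funext B
    show f B (∑ B₀, e B₀ * z B₀) = y B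
    rw [map_sum, Finset.sum_eq_single B]
    · rw [map_mul, he1 B, one_mul, hz B]
    · intro B₀ _ hBB
      rw [map_mul, he0 B₀ B hBB.symm, zero_mul]
    · intro h; exact absurd (Finset.mem_univ B) h
end
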